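/- arXiv:2405.07592 — 2 statements merged into one kernel-verified Lean document; each statement's English description precedes it below -/
import Mathlib

section
/- Let ρ = ∑_i p_i |s_i⟩⟨s_i| be a spectral decomposition of a density matrix with orthonormal eigenvectors |s_i⟩ and eigenvalues p_i ≥ 0 summing to 1, with Tr(ρ²) > 0. Let |ρ⟩ = (1/√(∑_i p_i²)) ∑_i p_i |s_i⟩⊗|s_i⟩ and |ψ_ρ⟩ = ∑_i √p_i |s_i⟩⊗|s_i⟩. Then for every α > 0, α ≠ 1, the order-α entanglement Rényi entropy satisfies H_α(|ρ⟩) ≤ H_α(|ψ_ρ⟩). -/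
open Real Finset

/-- Hölder: log-convexity of the moment map `t ↦ ∑ p i ^ t`. -/
lemma moment_holder {ι : Type*} [Fintype ι] (p : ι → ℝ) (hp : ∀ i, 0 ≤ p i)
    {s t θ : ℝ} (hs : 0 < s) (ht : 0 < t) (hθ0 : 0 < θ) (hθ1 : θ < 1) :
    ∑ i, p i ^ (θ * s + (1 - θ) * t) ≤
      (∑ i, p i ^ s) ^ θ * (∑ i, p i ^ t) ^ (1 - θ) := by
  have hθ1' : 0 < 1 - θ := by linarith
  have hconj : Real.HolderConjugate (1/θ) (1/(1-θ)) := by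
    rw [Real.holderConjugate_iff]
    constructor
    · rw [lt_div_iff₀ hθ0]; linarith
    · rw [one_div, one_div, inv_inv, inv_inv]; ring
  have key := Real.inner_le_Lp_mul_Lq_of_nonneg Finset.univ hconj
    (f := fun i => p i ^ (θ * s)) (g := fun i => p i ^ ((1 - θ) * t))
    (fun i _ => Real.rpow_nonneg (hp i) _) (fun i _ => Real.rpow_nonneg (hp i) _)
  have e1 : ∀ i : ι, p i ^ (θ * s) * p i ^ ((1 - θ) * t) = p i ^ (θ * s + (1 - θ) * t) := by
    intro i
    rw [← Real.rpow_add' (hp i)]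
    positivity
  have e2 : ∀ i : ι, (p i ^ (θ * s)) ^ (1/θ) = p i ^ s := by
    intro i
    rw [← Real.rpow_mul (hp i)]
    congr 1
    field_simp
  have e3 : ∀ i : ι, (p i ^ ((1 - θ) * t)) ^ (1/(1-θ)) = p i ^ t := by
    intro i
    rw [← Real.rpow_mul (hp i)]
    congr 1
    field_simp
  calc ∑ i, p i ^ (θ * s + (1 - θ) * t)
      = ∑ i, p i ^ (θ * s) * p i ^ ((1 - θ) * t) := by simp_rw [e1]
    _ ≤ (∑ i, (p i ^ (θ * s)) ^ (1/θ)) ^ (1 / (1/θ)) *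
        (∑ i, (p i ^ ((1 - θ) * t)) ^ (1/(1-θ))) ^ (1 / (1/(1-θ))) := key
    _ = (∑ i, p i ^ s) ^ θ * (∑ i, p i ^ t) ^ (1 - θ) := by
        simp_rw [e2, e3, one_div_one_div]

lemma moment_log_convex {ι : Type*} [Fintype ι] (p : ι → ℝ) (hp : ∀ i, 0 ≤ p i)
    {i0 : ι} (hi0 : 0 < p i0)
    {s t θ : ℝ} (hs : 0 < s) (ht : 0 < t) (hθ0 : 0 < θ) (hθ1 : θ < 1) :
    Real.log (∑ i, p i ^ (θ * s + (1 - θ) * t)) ≤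
      θ * Real.log (∑ i, p i ^ s) + (1 - θ) * Real.log (∑ i, p i ^ t) := by
  have hpos : ∀ u : ℝ, 0 < ∑ i, p i ^ u := by
    intro u
    refine Finset.sum_pos' (fun i _ => Real.rpow_nonneg (hp i) _) ⟨i0, Finset.mem_univ _, ?_⟩
    exact Real.rpow_pos_of_pos hi0 _
  have h := moment_holder p hp hs ht hθ0 hθ1
  have := Real.log_le_log (hpos _) h
  rwa [Real.log_mul (Real.rpow_pos_of_pos (hpos s) θ).ne' (Real.rpow_pos_of_pos (hpos t) (1-θ)).ne', Real.log_rpow (hpos s),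
    Real.log_rpow (hpos t)] at this
lemma mul_convex_comb_eq (d u x y : ℝ) (hd : d ≠ 0) :
    d * (u/d * x + (1 - u/d) * y) = u*x + (d-u)*y := by
  field_simp

open Real Finset

/-- Let ρ have spectral probabilities `p i ≥ 0` summing to 1 with
`∑ p i² > 0`.  The vectorized state `|ρ⟩` has Schmidt probabilities
`p i² / ∑ p j²` while the purification `|ψ_ρ⟩` has Schmidt probabilities
`p i`.  For every `α > 0`, `α ≠ 1`, the order-α entanglement Rényi entropy
satisfies `H_α(|ρ⟩) ≤ H_α(|ψ_ρ⟩)`. -/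
theorem renyi_entropy_vectorization_le_purification {ι : Type*} [Fintype ι]
    (p : ι → ℝ) (hp : ∀ i, 0 ≤ p i) (hsum : ∑ i, p i = 1)
    (hsq : 0 < ∑ i, (p i) ^ 2)
    (α : ℝ) (hα : 0 < α) (hα1 : α ≠ 1) :
    (1 / (1 - α)) * Real.logb 2 (∑ i, (p i ^ 2 / ∑ j, p j ^ 2) ^ α) ≤
      (1 / (1 - α)) * Real.logb 2 (∑ i, (p i) ^ α) := by
  -- some index with positive weight
  have hex : ∃ i0, 0 < p i0 := by
    by_contra h
    push_neg at h
    have : ∀ i, p i = 0 := fun i => le_antisymm (h i) (hp i)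
    simp [this] at hsq
  obtain ⟨i0, hi0⟩ := hex
  set S : ℝ := ∑ j, p j ^ 2 with hS
  have hpos : ∀ u : ℝ, 0 < ∑ i, p i ^ u := by
    intro u
    refine Finset.sum_pos' (fun i _ => Real.rpow_nonneg (hp i) _) ⟨i0, Finset.mem_univ _, ?_⟩
    exact Real.rpow_pos_of_pos hi0 _
  -- rpow-2 sum equals nat-pow-2 sum
  have hS2 : ∑ i, p i ^ (2:ℝ) = S := by
    simp [Real.rpow_two, hS]
  have hS1 : ∑ i, p i ^ (1:ℝ) = 1 := by
    simp [hsum]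
  -- rewrite the vectorized sum
  have hAeq : ∑ i, (p i ^ 2 / S) ^ α = (∑ i, p i ^ (2*α)) / S ^ α := by
    rw [Finset.sum_div]
    refine Finset.sum_congr rfl fun i _ => ?_
    rw [Real.div_rpow (by positivity) hsq.le, ← Real.rpow_two (p i),
      ← Real.rpow_mul (hp i)]
  set a := Real.log S with ha
  set b := Real.log (∑ i, p i ^ α) with hb
  set c := Real.log (∑ i, p i ^ (2*α)) with hc
  have hlogA : Real.log (∑ i, (p i ^ 2 / S) ^ α) = c - α * a := by
    rw [hAeq, Real.log_div (hpos (2*α)).ne' (by positivity), Real.log_rpow hsq]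
  -- key inequality on logs
  have key : (1 / (1 - α)) * (c - α * a) ≤ (1 / (1 - α)) * b := by
    rcases lt_or_gt_of_ne hα1 with h1 | h1
    · -- α < 1
      have h2 : (0:ℝ) < 2 - α := by linarith
      have C := moment_log_convex p hp hi0 (s := (2:ℝ)) (t := α)
        (by norm_num) hα (div_pos hα h2)
        (show α/(2-α) < 1 by rw [div_lt_one h2]; linarith)
      have eC : α/(2-α) * 2 + (1 - α/(2-α)) * α = 2*α := by field_simp [h2.ne']; ring
      rw [eC, hS2] at C
      have D := moment_log_convex p hp hi0 (s := α) (t := (2:ℝ))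
        hα (by norm_num) (div_pos one_pos h2)
        (show 1/(2-α) < 1 by rw [div_lt_one h2]; linarith)
      have eD : 1/(2-α) * α + (1 - 1/(2-α)) * 2 = 1 := by field_simp [h2.ne']; ring
      rw [eD, hS1, Real.log_one, hS2] at D
      have hC' : (2-α) * c ≤ α * a + (2-2*α) * b := by
        have h := mul_le_mul_of_nonneg_left C h2.le
        rw [mul_convex_comb_eq _ _ _ _ h2.ne'] at h
        linarith
      have hD' : 0 ≤ b + (1-α) * a := by
        have h := mul_le_mul_of_nonneg_left D h2.le
        rw [mul_convex_comb_eq _ _ _ _ h2.ne'] at h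
        linarith
      have hfin : c - α * a ≤ b := by
        nlinarith [mul_nonneg hα.le hD', h2, hC']
      have hpos1 : (0:ℝ) < 1/(1-α) := div_pos one_pos (by linarith)
      exact mul_le_mul_of_nonneg_left hfin hpos1.le
    · -- α > 1
      have h2 : (0:ℝ) < 2*α - 1 := by linarith
      have A := moment_log_convex p hp hi0 (s := (1:ℝ)) (t := 2*α)
        one_pos (by linarith) (div_pos (by linarith) h2)
        (show (2*α-2)/(2*α-1) < 1 by rw [div_lt_one h2]; linarith)
      have eA : (2*α-2)/(2*α-1) * 1 + (1 - (2*α-2)/(2*α-1)) * (2*α) = 2 := by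
        field_simp [h2.ne']; ring
      rw [eA, hS2, hS1, Real.log_one] at A
      have B := moment_log_convex p hp hi0 (s := (1:ℝ)) (t := 2*α)
        one_pos (by linarith) (div_pos hα h2)
        (show α/(2*α-1) < 1 by rw [div_lt_one h2]; linarith)
      have eB : α/(2*α-1) * 1 + (1 - α/(2*α-1)) * (2*α) = α := by
        rw [div_mul_eq_mul_div, one_sub_div h2.ne', div_mul_eq_mul_div, ← add_div, div_eq_iff h2.ne']; ring
      rw [eB, hS1, Real.log_one] at B
      have hA' : (2*α-1) * a ≤ c := by
        have h := mul_le_mul_of_nonneg_left A h2.le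
        rw [mul_convex_comb_eq _ _ _ _ h2.ne'] at h
        linarith
      have hB' : (2*α-1) * b ≤ (α-1) * c := by
        have h := mul_le_mul_of_nonneg_left B h2.le
        rw [mul_convex_comb_eq _ _ _ _ h2.ne'] at h
        linarith
      have hfin : b ≤ c - α * a := by
        nlinarith [mul_le_mul_of_nonneg_left hA' hα.le, hB', h2]
      have hneg : 1/(1-α) ≤ 0 := by
        apply div_nonpos_of_nonneg_of_nonpos <;> linarith
      exact mul_le_mul_of_nonpos_left hfin hneg
  -- convert logb to log
  rw [Real.logb, Real.logb, hlogA]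
  have h2pos : (0:ℝ) < Real.log 2 := Real.log_pos one_lt_two
  rw [mul_div_assoc', mul_div_assoc']
  exact (div_le_div_iff_of_pos_right h2pos).mpr key
end

section
/- Let |Ψ⟩ be a bipartite pure state on H_A ⊗ H_B with Schmidt decomposition |Ψ⟩ = ∑_{i=1}^{χ} λ_i |φ_i⟩|ψ_i⟩ (λ_i > 0, {|φ_i⟩} and {|ψ_i⟩} orthonormal, dim H_A = dim H_B = d). Then there exist four positive semi-definite Hermitian matrices ρ₁,...,ρ₄ on H_A, each of rank at most χ, and complex coefficients c₁,...,c₄, such that |Ψ⟩ = ∑_{k=1}^{4} c_k vec(ρ_k), where vec(ρ) = ∑_{ij} ρ_{ij}|i⟩⊗|j⟩. -/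
open scoped ComplexOrder
open Matrix

private lemma polar_key_aux (a b c e : ℂ) :
    ∑ k : Fin 4, Complex.I ^ (k : ℕ) / 4 *
      ((a + Complex.I ^ (k : ℕ) * b) * (c + (starRingEnd ℂ) (Complex.I ^ (k : ℕ)) * e))
      = a * e := by
  have h0 : ((0 : Fin 4) : ℕ) = 0 := rfl
  have h1 : ((1 : Fin 4) : ℕ) = 1 := rfl
  have h2 : ((2 : Fin 4) : ℕ) = 2 := rfl
  have h3 : ((3 : Fin 4) : ℕ) = 3 := rfl
  have hI3 : Complex.I ^ 3 = -Complex.I := by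
    rw [pow_succ, Complex.I_sq]; ring
  simp only [Fin.sum_univ_four, h0, h1, h2, h3, pow_zero, pow_one, Complex.I_sq, hI3,
    _root_.map_one, map_neg, Complex.conj_I]
  ring_nf
  simp only [Complex.I_sq]
  ring

/-- Let `|Ψ⟩ = ∑_{i<χ} λ_i |φ_i⟩|ψ_i⟩` be a Schmidt decomposition of a
bipartite pure state (λ_i > 0, both families orthonormal).  Then there exist
four positive semi-definite Hermitian matrices ρ₁,…,ρ₄, each of rank at most
χ, and complex coefficients c₁,…,c₄, such that
`|Ψ⟩ = ∑_k c_k vec(ρ_k)` where `vec(ρ) = ∑_{ij} ρ_{ij} |i⟩⊗|j⟩`. -/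
theorem schmidt_state_eq_four_psd_vectorizations {d χ : ℕ}
    (lam : Fin χ → ℝ) (hlam : ∀ i, 0 < lam i)
    (φ ψ : Fin χ → (Fin d → ℂ))
    (hφ : ∀ i j, (∑ x, star (φ i x) * φ j x) = if i = j then 1 else 0)
    (hψ : ∀ i j, (∑ x, star (ψ i x) * ψ j x) = if i = j then 1 else 0)
    (Ψ : Fin d × Fin d → ℂ)
    (hΨ : ∀ p, Ψ p = ∑ i, (lam i : ℂ) * φ i p.1 * ψ i p.2) :
    ∃ (ρ : Fin 4 → Matrix (Fin d) (Fin d) ℂ) (c : Fin 4 → ℂ),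
      (∀ k, (ρ k).PosSemidef ∧ (ρ k).rank ≤ χ) ∧
      ∀ p : Fin d × Fin d, Ψ p = ∑ k, c k * (ρ k) p.1 p.2 := by
  classical
  -- the four families of vectors `w k i = φ i + I^k (ψ i)^*`
  set w : Fin 4 → Fin χ → Fin d → ℂ :=
    fun k i x => φ i x + Complex.I ^ (k : ℕ) * star (ψ i x) with hw
  set B : Fin 4 → Matrix (Fin χ) (Fin d) ℂ :=
    fun k => Matrix.of (fun i y => (Real.sqrt (lam i) : ℂ) * star (w k i y)) with hB
  refine ⟨fun k => (B k)ᴴ * (B k), fun k => Complex.I ^ (k : ℕ) / 4, fun k =>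
    ⟨Matrix.posSemidef_conjTranspose_mul_self _, ?_⟩, ?_⟩
  · calc ((B k)ᴴ * (B k)).rank = (B k).rank := Matrix.rank_conjTranspose_mul_self _
      _ ≤ χ := Matrix.rank_le_height (B k)
  · intro p
    have hentry : ∀ k : Fin 4, ((B k)ᴴ * (B k)) p.1 p.2
        = ∑ i, (lam i : ℂ) * (w k i p.1 * star (w k i p.2)) := by
      intro k
      rw [Matrix.mul_apply]
      refine Finset.sum_congr rfl fun i _ => ?_
      have hs : star ((Real.sqrt (lam i) : ℂ)) = (Real.sqrt (lam i) : ℂ) := by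
        simp [Complex.star_def, Complex.conj_ofReal]
      have hsq : (Real.sqrt (lam i) : ℂ) * (Real.sqrt (lam i) : ℂ) = (lam i : ℂ) := by
        rw [← Complex.ofReal_mul, Real.mul_self_sqrt (hlam i).le]
      simp only [Matrix.conjTranspose_apply, hB, Matrix.of_apply, StarMul.star_mul, hs, star_star]
      rw [← hsq]; ring
    rw [hΨ]
    calc (∑ i, (lam i : ℂ) * φ i p.1 * ψ i p.2)
        = ∑ i, (lam i : ℂ) * ∑ k : Fin 4, Complex.I ^ (k : ℕ) / 4 *
            (w k i p.1 * star (w k i p.2)) := by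
          refine Finset.sum_congr rfl fun i _ => ?_
          have := polar_key_aux (φ i p.1) (star (ψ i p.1)) (star (φ i p.2)) (ψ i p.2)
          have hws : ∀ k : Fin 4, star (w k i p.2)
              = star (φ i p.2) + (starRingEnd ℂ) (Complex.I ^ (k : ℕ)) * ψ i p.2 := by
            intro k
            simp [hw, Complex.star_def, mul_comm]
          simp only [hws]
          simp only [hw]
          rw [this]
          ring
      _ = ∑ k : Fin 4, Complex.I ^ (k : ℕ) / 4 * (((B k)ᴴ * (B k)) p.1 p.2) := by
          simp only [Finset.mul_sum]
          rw [Finset.sum_comm]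
          refine Finset.sum_congr rfl fun k _ => ?_
          rw [hentry k, Finset.mul_sum]
          refine Finset.sum_congr rfl fun i _ => ?_
          ring
end
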